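/- The union over 0 ≤ r ≤ t ≤ 1 and 0 ≤ s ≤ 1 of the sets {(R₀,R₁) ∈ ℝ≥0² : R₀ ≤ min(r/6 + s/2, t), R₀ + R₁ ≤ min(r/6 + s/2 + (1−r)/2 + 1−s, t + (1−t)/2 + 1−s)} equals the convex polygon with vertices (0,0), (2/3,0), (1/2,1/2), (0,3/2). -/
import Mathlib


/-- The capacity region of the erasure example. -/
def CapRegion : Set (ℝ × ℝ) :=
  {R | ∃ r s t : ℝ, 0 ≤ r ∧ r ≤ t ∧ t ≤ 1 ∧ 0 ≤ s ∧ s ≤ 1 ∧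
    0 ≤ R.1 ∧ 0 ≤ R.2 ∧ R.1 ≤ min (r/6 + s/2) t ∧
    R.1 + R.2 ≤ min (r/6 + s/2 + (1-r)/2 + (1-s)) (t + (1-t)/2 + (1-s))}

lemma sub_hull {x y : ℝ} (hx : 0 ≤ x) (hy : 0 ≤ y) (h1 : 3*x+y ≤ 2) (h2 : 2*x+y ≤ 3/2) :
    (x,y) ∈ convexHull ℝ ({((0:ℝ),(0:ℝ)), ((2/3:ℝ),(0:ℝ)), ((1/2:ℝ),(1/2:ℝ)),
          ((0:ℝ),(3/2:ℝ))} : Set (ℝ × ℝ)) := by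
  set z : Fin 4 → ℝ × ℝ := ![(0,0), (2/3,0), (1/2,1/2), (0,3/2)] with hz
  have hzmem : ∀ i ∈ (Finset.univ : Finset (Fin 4)), z i ∈
      ({((0:ℝ),(0:ℝ)), ((2/3:ℝ),(0:ℝ)), ((1/2:ℝ),(1/2:ℝ)),
          ((0:ℝ),(3/2:ℝ))} : Set (ℝ × ℝ)) := by
    intro i _
    fin_cases i <;> simp [hz]
  by_cases hxy : y ≤ x
  · have h := Finset.centerMass_mem_convexHull (Finset.univ : Finset (Fin 4))
      (w := ![1 - 3*x/2 - y/2, 3*(x-y)/2, 2*y, 0]) (z := z)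
      (by intro i _; fin_cases i <;> simp <;> linarith)
      (by simp [Fin.sum_univ_four]; linarith)
      hzmem
    have he : Finset.univ.centerMass ![1 - 3*x/2 - y/2, 3*(x-y)/2, 2*y, 0] z = (x, y) := by
      rw [Finset.centerMass]
      simp [hz, Fin.sum_univ_four, Prod.ext_iff, Prod.smul_mk]
      norm_num
      constructor <;> ring
    rwa [he] at h
  · push_neg at hxy
    have h := Finset.centerMass_mem_convexHull (Finset.univ : Finset (Fin 4))
      (w := ![1 - 4*x/3 - 2*y/3, 0, 2*x, 2*(y-x)/3]) (z := z)
      (by intro i _; fin_cases i <;> simp <;> linarith)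
      (by simp [Fin.sum_univ_four]; linarith)
      hzmem
    have he : Finset.univ.centerMass ![1 - 4*x/3 - 2*y/3, 0, 2*x, 2*(y-x)/3] z = (x, y) := by
      rw [Finset.centerMass]
      simp [hz, Fin.sum_univ_four, Prod.ext_iff, Prod.smul_mk]
      norm_num
      constructor <;> ring
    rwa [he] at h

lemma hull_sub {p : ℝ × ℝ}
    (h : p ∈ convexHull ℝ ({((0:ℝ),(0:ℝ)), ((2/3:ℝ),(0:ℝ)), ((1/2:ℝ),(1/2:ℝ)),
          ((0:ℝ),(3/2:ℝ))} : Set (ℝ × ℝ))) :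
    0 ≤ p.1 ∧ 0 ≤ p.2 ∧ 3*p.1+p.2 ≤ 2 ∧ 2*p.1+p.2 ≤ 3/2 := by
  have hconv : Convex ℝ {q : ℝ × ℝ | 0 ≤ q.1 ∧ 0 ≤ q.2 ∧ 3*q.1+q.2 ≤ 2 ∧ 2*q.1+q.2 ≤ 3/2} := by
    intro a ha b hb u v hu hv huv
    obtain ⟨ha1, ha2, ha3, ha4⟩ := ha
    obtain ⟨hb1, hb2, hb3, hb4⟩ := hb
    refine ⟨?_, ?_, ?_, ?_⟩ <;>
      simp only [Prod.fst_add, Prod.snd_add, Prod.smul_fst, Prod.smul_snd, smul_eq_mul] <;>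
      nlinarith [mul_le_mul_of_nonneg_left ha3 hu, mul_le_mul_of_nonneg_left hb3 hv,
        mul_le_mul_of_nonneg_left ha4 hu, mul_le_mul_of_nonneg_left hb4 hv,
        mul_nonneg hu ha1, mul_nonneg hv hb1, mul_nonneg hu ha2, mul_nonneg hv hb2]
  have := convexHull_min (s := ({((0:ℝ),(0:ℝ)), ((2/3:ℝ),(0:ℝ)), ((1/2:ℝ),(1/2:ℝ)),
          ((0:ℝ),(3/2:ℝ))} : Set (ℝ × ℝ))) ?_ hconv h
  · exact this
  · intro q hq
    simp only [Set.mem_insert_iff, Set.mem_singleton_iff] at hq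
    rcases hq with h | h | h | h <;> subst h <;> norm_num

/-- The capacity region of the erasure example equals the convex polygon with
vertices `(0,0)`, `(2/3,0)`, `(1/2,1/2)`, `(0,3/2)`. -/
theorem cap_region_eq_polygon :
    CapRegion =
      convexHull ℝ ({((0:ℝ),(0:ℝ)), ((2/3:ℝ),(0:ℝ)), ((1/2:ℝ),(1/2:ℝ)),
          ((0:ℝ),(3/2:ℝ))} : Set (ℝ × ℝ)) := by
  ext ⟨x, y⟩
  constructor
  · rintro ⟨r, s, t, hr, hrt, ht, hs0, hs1, hx, hy, hA, hB⟩
    simp only at hx hy hA hB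
    have hA1 : x ≤ r/6 + s/2 := le_trans hA (min_le_left _ _)
    have hA2 : x ≤ t := le_trans hA (min_le_right _ _)
    have hB1 : x + y ≤ r/6 + s/2 + (1-r)/2 + (1-s) := le_trans hB (min_le_left _ _)
    have hB2 : x + y ≤ t + (1-t)/2 + (1-s) := le_trans hB (min_le_right _ _)
    exact sub_hull hx hy (by linarith) (by linarith)
  · intro h
    obtain ⟨hx, hy, h1, h2⟩ := hull_sub h
    simp only at hx hy h1 h2
    by_cases hc : x ≤ 1/2
    · refine ⟨0, 2*x, 1, le_refl _, zero_le_one, le_refl _, by linarith, by linarith,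
        hx, hy, ?_, ?_⟩ <;> simp only <;> rw [le_min_iff] <;> constructor <;> linarith
    · push_neg at hc
      refine ⟨6*x - 3, 1, 1, by linarith, by linarith, le_refl _, zero_le_one, le_refl _,
        hx, hy, ?_, ?_⟩ <;> simp only <;> rw [le_min_iff] <;> constructor <;> linarith
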